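/- Suppose β₁k₁ ≤ b + α with b, α, β₁, k₁ ≥ 0 and b + α ≤ 1. Let x, u, z be real numbers with 0 ≤ x ≤ 1, u ≥ 0, z ≥ 0 and bz − αu ≥ 0, and set u' = u − bu − αu + β₁k₁ux and z' = z − bz + αu. Then bz' − αu' ≥ 0. -/
import Mathlib

theorem invariant_set_M (b α β₁ k₁ x u z : ℝ)
    (hb : 0 ≤ b) (hα : 0 ≤ α) (hβ₁ : 0 ≤ β₁) (hk₁ : 0 ≤ k₁)
    (hle : β₁ * k₁ ≤ b + α) (hba : b + α ≤ 1)
    (hx0 : 0 ≤ x) (hx1 : x ≤ 1) (hu : 0 ≤ u) (hz : 0 ≤ z)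
    (hM : 0 ≤ b * z - α * u) :
    0 ≤ b * (z - b * z + α * u) - α * (u - b * u - α * u + β₁ * k₁ * u * x) := by
  have key : b * (z - b * z + α * u) - α * (u - b * u - α * u + β₁ * k₁ * u * x)
      = (1 - b) * (b * z - α * u) + (α * u) * ((b + α) - β₁ * k₁ * x) := by ring
  rw [key]
  have h1 : 0 ≤ (1 - b) * (b * z - α * u) := by
    apply mul_nonneg _ hM; linarith
  have h2 : 0 ≤ (b + α) - β₁ * k₁ * x := by
    have : β₁ * k₁ * x ≤ β₁ * k₁ * 1 :=
      mul_le_mul_of_nonneg_left hx1 (mul_nonneg hβ₁ hk₁)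
    linarith
  have h3 : 0 ≤ (α * u) * ((b + α) - β₁ * k₁ * x) :=
    mul_nonneg (mul_nonneg hα hu) h2
  linarith
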